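/- A linear functional u on polynomials is positive-definite if and only if all its moments u_n = ⟨u, x^n⟩ are real and all Hankel determinants H_n = det[(u_{i+j})_{i,j=0}^n] are strictly positive. -/

import Mathlib

open Polynomial

section Aux
open Filter Topology Matrix


/-- If `q ≥ 0` on ℝ and `q x₀ = 0` then `(X - C x₀)^2 ∣ q`, with nonneg quotient. -/
lemma double_root_of_min (q : Polynomial ℝ) (x₀ : ℝ) (hq : ∀ x, 0 ≤ q.eval x)
    (h0 : q.eval x₀ = 0) : ∃ r : Polynomial ℝ, q = (X - C x₀) ^ 2 * r ∧ ∀ x, 0 ≤ r.eval x := by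
  have h1 : (X - C x₀) ∣ q := dvd_iff_isRoot.2 h0
  obtain ⟨s, hs⟩ := h1
  have hsx : ∀ x, q.eval x = (x - x₀) * s.eval x := by
    intro x; rw [hs]; simp
  have hcont : ContinuousAt (fun x => s.eval x) x₀ := (Polynomial.continuous s).continuousAt
  have hpos : ∀ x, x₀ < x → 0 ≤ s.eval x := by
    intro x hx
    have := hq x
    rw [hsx x] at this
    exact nonneg_of_mul_nonneg_right this (by linarith)
  have hneg : ∀ x, x < x₀ → s.eval x ≤ 0 := by
    intro x hx
    have := hq x
    rw [hsx x] at this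
    nlinarith [this]
  have hge : 0 ≤ s.eval x₀ := by
    have ht : Filter.Tendsto (fun x => s.eval x) (𝓝[>] x₀) (𝓝 (s.eval x₀)) :=
      hcont.continuousWithinAt.tendsto
    refine ge_of_tendsto ht ?_
    filter_upwards [self_mem_nhdsWithin] with x hx
    exact hpos x hx
  have hle : s.eval x₀ ≤ 0 := by
    have ht : Filter.Tendsto (fun x => s.eval x) (𝓝[<] x₀) (𝓝 (s.eval x₀)) :=
      hcont.continuousWithinAt.tendsto
    refine le_of_tendsto ht ?_
    filter_upwards [self_mem_nhdsWithin] with x hx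
    exact hneg x hx
  have hs0 : s.eval x₀ = 0 := le_antisymm hle hge
  obtain ⟨r, hr⟩ := dvd_iff_isRoot.2 hs0
  refine ⟨r, by rw [hs, hr]; ring, ?_⟩
  have hrx : ∀ x, x ≠ x₀ → 0 ≤ r.eval x := by
    intro x hx
    have := hq x
    rw [hs, hr] at this
    simp only [eval_mul, eval_sub, eval_X, eval_C] at this
    have hne : x - x₀ ≠ 0 := sub_ne_zero.2 hx
    have h2 : 0 < (x - x₀) * (x - x₀) := mul_self_pos.mpr hne
    nlinarith [this]
  intro x
  rcases eq_or_ne x x₀ with rfl | hx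
  · have hcr : ContinuousAt (fun y => r.eval y) x := (Polynomial.continuous r).continuousAt
    have ht : Filter.Tendsto (fun y => r.eval y) (𝓝[≠] x) (𝓝 (r.eval x)) :=
      hcr.continuousWithinAt.tendsto
    refine ge_of_tendsto ht ?_
    filter_upwards [self_mem_nhdsWithin] with y hy
    exact hrx y hy
  · exact hrx x hx

lemma sos_aux : ∀ (N : ℕ) (p : Polynomial ℝ), p.natDegree ≤ N → (∀ x, 0 ≤ p.eval x) →
    ∃ L : Multiset (Polynomial ℝ), p = (L.map (fun q => q * q)).sum := by
  intro N
  induction N using Nat.strong_induction_on with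
  | _ N IH =>
    intro p hdeg hp
    rcases Nat.eq_zero_or_pos p.natDegree with h0 | hpos
    · -- constant
      obtain ⟨c, rfl⟩ := Polynomial.natDegree_eq_zero.1 h0
      have hc : 0 ≤ c := by simpa using hp 0
      refine ⟨{C (Real.sqrt c)}, ?_⟩
      simp [← Polynomial.C_mul, Real.mul_self_sqrt hc]
    · -- positive degree: take global min at x₀
      obtain ⟨x₀, hx₀⟩ := p.exists_forall_norm_le
      set m := p.eval x₀ with hm
      have hm0 : 0 ≤ m := hp x₀
      have hmin : ∀ x, m ≤ p.eval x := by
        intro x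
        have := hx₀ x
        rwa [Real.norm_eq_abs, Real.norm_eq_abs, abs_of_nonneg (hp x₀), abs_of_nonneg (hp x)] at this
      set q := p - C m with hq
      have hq0 : ∀ x, 0 ≤ q.eval x := by
        intro x; simp [hq]; linarith [hmin x]
      have hqx₀ : q.eval x₀ = 0 := by simp [hq, ← hm]
      obtain ⟨r, hr, hrpos⟩ := double_root_of_min q x₀ hq0 hqx₀
      have hqdeg : q.natDegree = p.natDegree := natDegree_sub_C
      have hqne : q ≠ 0 := by
        intro h
        rw [h] at hqdeg
        simp at hqdeg
        omega
      have hrne : r ≠ 0 := by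
        rintro rfl
        simp at hr
        exact hqne hr
      have hdr : q.natDegree = 2 + r.natDegree := by
        rw [hr, natDegree_mul (pow_ne_zero _ (X_sub_C_ne_zero x₀)) hrne]
        congr 1
        rw [natDegree_pow]
        simp
      have hrdeg : r.natDegree < N := by omega
      obtain ⟨L, hL⟩ := IH r.natDegree hrdeg r le_rfl hrpos
      refine ⟨C (Real.sqrt m) ::ₘ L.map (fun s => (X - C x₀) * s), ?_⟩
      rw [Multiset.map_cons, Multiset.sum_cons, Multiset.map_map]
      have h1 : (C (Real.sqrt m) * C (Real.sqrt m)) = C m := by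
        rw [← Polynomial.C_mul, Real.mul_self_sqrt hm0]
      have h2 : (L.map ((fun q => q * q) ∘ fun s => (X - C x₀) * s)).sum
          = (X - C x₀) ^ 2 * (L.map (fun q => q * q)).sum := by
        rw [Finset.sum_multiset_map_count, Finset.sum_multiset_map_count, Finset.mul_sum]
        refine Finset.sum_congr rfl fun s _ => ?_
        simp only [Function.comp]
        ring
      rw [h1, h2, ← hL, ← hr]
      rw [hq]
      ring

-- check defs
example (M : Matrix (Fin 2) (Fin 2) ℝ) (h : M.PosDef) : True := by
  obtain ⟨h1, h2⟩ := h
  have : ∀ x : Fin 2 → ℝ, x ≠ 0 → 0 < star x ⬝ᵥ M *ᵥ x :=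
    fun x hx => Matrix.PosDef.dotProduct_mulVec_pos ⟨h1, h2⟩ hx
  trivial

lemma posDef_of_posSemidef_det_ne_zero {n : ℕ} {M : Matrix (Fin n) (Fin n) ℝ}
    (h : M.PosSemidef) (hd : M.det ≠ 0) : M.PosDef := by
  refine Matrix.PosDef.of_dotProduct_mulVec_pos h.1 fun x hx =>
    lt_of_le_of_ne (h.dotProduct_mulVec_nonneg x) fun heq => ?_
  have h0 : M *ᵥ x = 0 := (h.dotProduct_mulVec_zero_iff x).1 heq.symm
  exact hd ((Matrix.exists_mulVec_eq_zero_iff).1 ⟨x, hx, h0⟩)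

lemma posDef_one_dim {M : Matrix (Fin 1) (Fin 1) ℝ} (h : 0 < M.det) : M.PosDef := by
  rw [Matrix.det_fin_one] at h
  refine Matrix.PosDef.of_dotProduct_mulVec_pos ?_ ?_
  · ext i j
    fin_cases i; fin_cases j
    simp [Matrix.conjTranspose_apply]
  · intro x hx
    have hx0 : x 0 ≠ 0 := by
      intro h0
      apply hx
      funext i
      fin_cases i
      exact h0
    simp [dotProduct, Matrix.mulVec, Fin.sum_univ_one]
    calc (0:ℝ) < M 0 0 * (x 0 * x 0) := mul_pos h (mul_self_pos.mpr hx0)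
    _ = x 0 * (M 0 0 * x 0) := by ring

lemma sylvester : ∀ (n : ℕ) (M : Matrix (Fin (n+1)) (Fin (n+1)) ℝ), M.IsSymm →
    (∀ (k : ℕ) (h : k ≤ n),
      0 < (M.submatrix (Fin.castLE (Nat.succ_le_succ h)) (Fin.castLE (Nat.succ_le_succ h))).det) →
    M.PosDef := by
  intro n
  induction n with
  | zero =>
    intro M _ hmin
    have := hmin 0 le_rfl
    have hsub : M.submatrix (Fin.castLE (le_refl 1)) (Fin.castLE (le_refl 1)) = M := by
      ext i j; simp
    rw [hsub] at this
    exact posDef_one_dim this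
  | succ n IH =>
    intro M hsymm hmin
    set A : Matrix (Fin (n+1)) (Fin (n+1)) ℝ :=
      M.submatrix (Fin.castLE (Nat.le_succ (n+1))) (Fin.castLE (Nat.le_succ (n+1))) with hA
    have hAsymm : A.IsSymm := hsymm.submatrix _
    have hAposdef : A.PosDef := by
      apply IH A hAsymm
      intro k hk
      have h2 : (A.submatrix (Fin.castLE (Nat.succ_le_succ hk)) (Fin.castLE (Nat.succ_le_succ hk)))
          = M.submatrix (Fin.castLE (by omega)) (Fin.castLE (by omega)) := by
        rw [hA, Matrix.submatrix_submatrix]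
        congr 1
      rw [h2]
      exact hmin k (by omega)
    have hdetM : 0 < M.det := by
      have := hmin (n+1) le_rfl
      have hsub : M.submatrix (Fin.castLE (le_refl (n+2))) (Fin.castLE (le_refl (n+2))) = M := by
        ext i j; simp
      rwa [hsub] at this
    haveI : Invertible A :=
      A.invertibleOfIsUnitDet (isUnit_iff_ne_zero.mpr (ne_of_gt hAposdef.det_pos))
    set e : Fin (n+1) ⊕ Fin 1 ≃ Fin (n+2) := finSumFinEquiv with he
    set N := M.submatrix e e with hN
    have hN11 : N.toBlocks₁₁ = A := by
      ext i j
      simp only [hN, Matrix.toBlocks₁₁, Matrix.submatrix_apply, Matrix.of_apply, hA]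
      congr 1
    have hN21 : N.toBlocks₂₁ = N.toBlocks₁₂ᴴ := by
      ext i j
      simp only [Matrix.toBlocks₂₁, Matrix.toBlocks₁₂, Matrix.conjTranspose_apply, Matrix.of_apply,
        hN, Matrix.submatrix_apply, star_trivial]
      exact (Matrix.IsSymm.apply hsymm _ _)
    have hblocks : N = Matrix.fromBlocks A N.toBlocks₁₂ N.toBlocks₁₂ᴴ N.toBlocks₂₂ := by
      rw [← hN11, ← hN21, Matrix.fromBlocks_toBlocks]
    -- Schur complement
    set S := N.toBlocks₂₂ - N.toBlocks₁₂ᴴ * A⁻¹ * N.toBlocks₁₂ with hS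
    have hdetN : N.det = M.det := Matrix.det_submatrix_equiv_self e M
    have hdetblocks : N.det = A.det * S.det := by
      rw [hS]
      conv_lhs => rw [hblocks]
      rw [Matrix.det_fromBlocks₁₁, Matrix.invOf_eq_nonsing_inv]
    have hdetS : 0 < S.det := by
      have hAd : 0 < A.det := hAposdef.det_pos
      have : 0 < A.det * S.det := by rw [← hdetblocks, hdetN]; exact hdetM
      nlinarith [hAd, this]
    have hSpos : S.PosDef := posDef_one_dim hdetS
    have hNpsd : N.PosSemidef := by
      rw [hblocks, Matrix.PosDef.fromBlocks₁₁ _ _ hAposdef]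
      exact hSpos.posSemidef
    have hMpsd : M.PosSemidef := (Matrix.posSemidef_submatrix_equiv e).1 hNpsd
    exact posDef_of_posSemidef_det_ne_zero hMpsd (ne_of_gt hdetM)

lemma u_sq_expand (u : Polynomial ℂ →ₗ[ℂ] ℂ) (q : Polynomial ℝ) (n : ℕ) (hq : q.natDegree ≤ n) :
    u ((q*q).map (algebraMap ℝ ℂ)) =
      ∑ i ∈ Finset.range (n+1), ∑ j ∈ Finset.range (n+1),
        ((q.coeff i * q.coeff j : ℝ) : ℂ) * u (X ^ (i+j)) := by
  have hq' : q = ∑ i ∈ Finset.range (n+1), monomial i (q.coeff i) :=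
    q.as_sum_range' (n+1) (Nat.lt_succ_of_le hq)
  have hmap : q.map (algebraMap ℝ ℂ)
      = ∑ i ∈ Finset.range (n+1), monomial i ((q.coeff i : ℂ)) := by
    conv_lhs => rw [hq']
    rw [Polynomial.map_sum]
    refine Finset.sum_congr rfl fun i _ => ?_
    rw [Polynomial.map_monomial]
    norm_num
  rw [Polynomial.map_mul, hmap, Finset.sum_mul_sum]
  rw [map_sum]
  refine Finset.sum_congr rfl fun i _ => ?_
  rw [map_sum]
  refine Finset.sum_congr rfl fun j _ => ?_
  rw [monomial_mul_monomial, ← smul_X_eq_monomial, _root_.map_smul]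
  rw [smul_eq_mul]
  push_cast
  ring

lemma u_sq_dot (u : Polynomial ℂ →ₗ[ℂ] ℂ) (m : ℕ → ℝ) (hm : ∀ k, u (X^k) = (m k : ℂ))
    (q : Polynomial ℝ) (n : ℕ) (hq : q.natDegree ≤ n) :
    u ((q*q).map (algebraMap ℝ ℂ)) =
      ((star (fun i : Fin (n+1) => q.coeff i) ⬝ᵥ
        (Matrix.of fun i j : Fin (n+1) => m ((i:ℕ)+(j:ℕ))) *ᵥ (fun i : Fin (n+1) => q.coeff i) : ℝ) : ℂ) := by
  rw [u_sq_expand u q n hq]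
  simp only [hm]
  have : (star (fun i : Fin (n+1) => q.coeff i) ⬝ᵥ
        (Matrix.of fun i j : Fin (n+1) => m ((i:ℕ)+(j:ℕ))) *ᵥ (fun i : Fin (n+1) => q.coeff i) : ℝ)
      = ∑ i ∈ Finset.range (n+1), ∑ j ∈ Finset.range (n+1),
          q.coeff i * q.coeff j * m (i+j) := by
    rw [Finset.sum_range fun i => ∑ j ∈ Finset.range (n+1), q.coeff i * q.coeff j * m (i+j)]
    simp only [dotProduct, Matrix.mulVec, Pi.star_apply, star_trivial, Matrix.of_apply,
      Finset.mul_sum]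
    refine Finset.sum_congr rfl fun i _ => ?_
    rw [Finset.sum_range fun j => q.coeff (i:ℕ) * q.coeff j * m ((i:ℕ)+j)]
    refine Finset.sum_congr rfl fun j _ => ?_
    ring
  rw [this]
  push_cast
  refine Finset.sum_congr rfl fun i _ => ?_
  refine Finset.sum_congr rfl fun j _ => ?_
  ring
noncomputable def polyOfVec {n : ℕ} (v : Fin (n+1) → ℝ) : Polynomial ℝ :=
  ∑ i : Fin (n+1), monomial (i : ℕ) (v i)

lemma polyOfVec_coeff {n : ℕ} (v : Fin (n+1) → ℝ) (i : Fin (n+1)) :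
    (polyOfVec v).coeff i = v i := by
  rw [polyOfVec, finset_sum_coeff]
  rw [Finset.sum_eq_single i]
  · simp
  · intro j _ hji
    rw [coeff_monomial]
    simp only [ite_eq_right_iff]
    intro h
    exact absurd (Fin.ext h) hji
  · simp

lemma polyOfVec_natDegree {n : ℕ} (v : Fin (n+1) → ℝ) : (polyOfVec v).natDegree ≤ n := by
  refine natDegree_sum_le_of_forall_le _ _ fun i _ => ?_
  exact (natDegree_monomial_le _).trans (Nat.lt_succ_iff.mp i.isLt)

lemma polyOfVec_ne_zero {n : ℕ} (v : Fin (n+1) → ℝ) (hv : v ≠ 0) : polyOfVec v ≠ 0 := by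
  intro h
  apply hv
  funext i
  have := polyOfVec_coeff v i
  rw [h] at this
  simpa using this.symm

lemma coeffVec_ne_zero {n : ℕ} (q : Polynomial ℝ) (hq : q ≠ 0) (hd : q.natDegree ≤ n) :
    (fun i : Fin (n+1) => q.coeff i) ≠ 0 := by
  intro h
  have := congrFun h ⟨q.natDegree, Nat.lt_succ_of_le hd⟩
  simp only [Pi.zero_apply] at this
  exact (Polynomial.leadingCoeff_ne_zero.mpr hq) this

lemma even_moment_pos (u : Polynomial ℂ →ₗ[ℂ] ℂ) (hu : ∀ p : Polynomial ℝ, p ≠ 0 → (∀ x : ℝ, 0 ≤ p.eval x) →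
    ∃ r : ℝ, 0 < r ∧ u (p.map (algebraMap ℝ ℂ)) = (r : ℂ)) (k : ℕ) :
    ∃ r : ℝ, 0 < r ∧ u (X ^ (2*k)) = (r : ℂ) := by
  have h1 : (X ^ k * X ^ k : Polynomial ℝ) ≠ 0 :=
    mul_ne_zero (pow_ne_zero _ X_ne_zero) (pow_ne_zero _ X_ne_zero)
  obtain ⟨r, hr, hur⟩ := hu (X ^ k * X ^ k) h1
    (fun x => by simp only [eval_mul]; exact mul_self_nonneg _)
  refine ⟨r, hr, ?_⟩
  rw [← hur]
  congr 1
  rw [Polynomial.map_mul, Polynomial.map_pow, map_X, ← pow_add, two_mul]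

lemma moment_real (u : Polynomial ℂ →ₗ[ℂ] ℂ) (hu : ∀ p : Polynomial ℝ, p ≠ 0 → (∀ x : ℝ, 0 ≤ p.eval x) →
    ∃ r : ℝ, 0 < r ∧ u (p.map (algebraMap ℝ ℂ)) = (r : ℂ)) (k : ℕ) :
    ∃ r : ℝ, u (X ^ k) = (r : ℂ) := by
  obtain ⟨r2, _, hr2⟩ := even_moment_pos u hu k
  obtain ⟨r0, _, hr0⟩ := even_moment_pos u hu 0
  have h0 : u (X ^ 0) = (r0 : ℂ) := by rw [← hr0]
  have hpne : ((X ^ k + 1) * (X ^ k + 1) : Polynomial ℝ) ≠ 0 := by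
    intro h
    have := congrArg (fun p => Polynomial.eval (0:ℝ) p) h
    simp only [eval_mul, eval_add, eval_pow, eval_X, eval_one, eval_zero] at this
    nlinarith [pow_nonneg (le_refl (0:ℝ)) k]
  obtain ⟨r, _, hur⟩ := hu ((X ^ k + 1) * (X ^ k + 1)) hpne
    (fun x => by simp only [eval_mul]; exact mul_self_nonneg _)
  have hexp : (((X ^ k + 1) * (X ^ k + 1) : Polynomial ℝ)).map (algebraMap ℝ ℂ)
      = X ^ (2*k) + (2:ℂ) • X ^ k + X ^ 0 := by
    rw [Polynomial.map_mul, Polynomial.map_add, Polynomial.map_pow, map_X, Polynomial.map_one,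
      smul_eq_C_mul, show (C 2 : Polynomial ℂ) = 2 from map_ofNat C 2]
    ring
  rw [hexp] at hur
  rw [map_add, map_add, _root_.map_smul, smul_eq_mul, hr2, h0] at hur
  refine ⟨(r - r2 - r0)/2, ?_⟩
  have : (2:ℂ) * u (X ^ k) = (r:ℂ) - r2 - r0 := by linear_combination hur
  push_cast
  linear_combination this / 2

end Aux

def PosDefFunctional (u : Polynomial ℂ →ₗ[ℂ] ℂ) : Prop :=
  ∀ p : Polynomial ℝ, p ≠ 0 → (∀ x : ℝ, 0 ≤ p.eval x) →
    ∃ r : ℝ, 0 < r ∧ u (p.map (algebraMap ℝ ℂ)) = (r : ℂ)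

noncomputable def hankelDet (u : Polynomial ℂ →ₗ[ℂ] ℂ) (n : ℕ) : ℂ :=
  Matrix.det (Matrix.of fun i j : Fin (n + 1) => u (X ^ ((i : ℕ) + (j : ℕ))))

section Aux2
open Matrix

lemma hankelDet_eq_real (u : Polynomial ℂ →ₗ[ℂ] ℂ) (m : ℕ → ℝ) (hm : ∀ k, u (X^k) = (m k : ℂ))
    (n : ℕ) : hankelDet u n =
      (((Matrix.of fun i j : Fin (n+1) => m ((i:ℕ)+(j:ℕ))).det : ℝ) : ℂ) := by
  rw [hankelDet]
  have : (Matrix.of fun i j : Fin (n + 1) => u (X ^ ((i : ℕ) + (j : ℕ))))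
      = (Matrix.of fun i j : Fin (n+1) => m ((i:ℕ)+(j:ℕ))).map (Complex.ofRealHom) := by
    ext i j
    simp [hm]
  rw [this, ← RingHom.mapMatrix_apply, ← RingHom.map_det]
  rfl

lemma hankel_isSymm (m : ℕ → ℝ) (n : ℕ) :
    (Matrix.of fun i j : Fin (n+1) => m ((i:ℕ)+(j:ℕ))).IsSymm := by
  ext i j
  simp [Matrix.transpose_apply, add_comm]

lemma hankel_isHermitian (m : ℕ → ℝ) (n : ℕ) :
    (Matrix.of fun i j : Fin (n+1) => m ((i:ℕ)+(j:ℕ))).IsHermitian := by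
  ext i j
  simp [Matrix.conjTranspose_apply, add_comm]

/-- `u` is positive-definite iff all moments are real and all Hankel determinants
are strictly positive. -/
theorem posDef_iff_moments_real_and_hankel_pos (u : Polynomial ℂ →ₗ[ℂ] ℂ) :
    PosDefFunctional u ↔
      ((∀ n : ℕ, ∃ r : ℝ, u (X ^ n) = (r : ℂ)) ∧
       (∀ n : ℕ, ∃ r : ℝ, 0 < r ∧ hankelDet u n = (r : ℂ))) := by
  constructor
  · intro hu
    have hmom : ∀ k : ℕ, ∃ r : ℝ, u (X ^ k) = (r : ℂ) := moment_real u hu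
    refine ⟨hmom, ?_⟩
    choose m hm using hmom
    intro n
    set Mn : Matrix (Fin (n+1)) (Fin (n+1)) ℝ :=
      Matrix.of fun i j : Fin (n+1) => m ((i:ℕ)+(j:ℕ)) with hMn
    have hpd : Mn.PosDef := by
      refine Matrix.PosDef.of_dotProduct_mulVec_pos (hankel_isHermitian m n) fun v hv => ?_
      set q := polyOfVec v with hqdef
      have hqne : q ≠ 0 := polyOfVec_ne_zero v hv
      have hcoeff : (fun i : Fin (n+1) => q.coeff i) = v := funext (polyOfVec_coeff v)
      have hdot := u_sq_dot u m hm q n (polyOfVec_natDegree v)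
      rw [hcoeff] at hdot
      obtain ⟨r, hr, hur⟩ := hu (q*q) (mul_ne_zero hqne hqne)
        (fun x => by simp only [eval_mul]; exact mul_self_nonneg _)
      rw [hur] at hdot
      have : r = star v ⬝ᵥ Mn *ᵥ v := by exact_mod_cast hdot
      rw [← this]
      exact hr
    exact ⟨Mn.det, hpd.det_pos, hankelDet_eq_real u m hm n⟩
  · rintro ⟨hmom, hdet⟩ p hp hpnn
    choose m hm using hmom
    have hdetpos : ∀ n : ℕ,
        0 < (Matrix.of fun i j : Fin (n+1) => m ((i:ℕ)+(j:ℕ))).det := by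
      intro n
      obtain ⟨r, hr, hur⟩ := hdet n
      rw [hankelDet_eq_real u m hm n] at hur
      have : ((Matrix.of fun i j : Fin (n+1) => m ((i:ℕ)+(j:ℕ))).det : ℝ) = r := by
        exact_mod_cast hur
      rw [this]; exact hr
    have hpd : ∀ n : ℕ, (Matrix.of fun i j : Fin (n+1) => m ((i:ℕ)+(j:ℕ))).PosDef := by
      intro n
      apply sylvester n _ (hankel_isSymm m n)
      intro k hk
      have hsub : ((Matrix.of fun i j : Fin (n+1) => m ((i:ℕ)+(j:ℕ))).submatrix
            (Fin.castLE (Nat.succ_le_succ hk)) (Fin.castLE (Nat.succ_le_succ hk)))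
          = Matrix.of fun i j : Fin (k+1) => m ((i:ℕ)+(j:ℕ)) := by
        ext i j
        simp [Matrix.submatrix_apply]
      rw [hsub]
      exact hdetpos k
    have key : ∀ q : Polynomial ℝ, ∃ r : ℝ, 0 ≤ r ∧ (q ≠ 0 → 0 < r) ∧
        u ((q*q).map (algebraMap ℝ ℂ)) = (r : ℂ) := by
      intro q
      set n := q.natDegree with hn
      set v := fun i : Fin (n+1) => q.coeff i with hv
      refine ⟨star v ⬝ᵥ (Matrix.of fun i j : Fin (n+1) => m ((i:ℕ)+(j:ℕ))) *ᵥ v, ?_, ?_, ?_⟩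
      · exact (hpd n).posSemidef.dotProduct_mulVec_nonneg v
      · intro hq
        exact (hpd n).dotProduct_mulVec_pos (coeffVec_ne_zero q hq le_rfl)
      · exact u_sq_dot u m hm q n le_rfl
    choose g hg0 hgpos hgu using key
    obtain ⟨L, hL⟩ := sos_aux p.natDegree p le_rfl hpnn
    have hmapsum : u (p.map (algebraMap ℝ ℂ))
        = (L.map (fun q => u ((q*q).map (algebraMap ℝ ℂ)))).sum := by
      conv_lhs => rw [hL]
      rw [← Polynomial.coe_mapRingHom, map_multiset_sum, Multiset.map_map,
        map_multiset_sum, Multiset.map_map]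
      rfl
    have hmapsum2 : u (p.map (algebraMap ℝ ℂ)) = (((L.map g).sum : ℝ) : ℂ) := by
      rw [hmapsum]
      have h1 : L.map (fun q => u ((q*q).map (algebraMap ℝ ℂ)))
          = (L.map g).map (Complex.ofRealHom) := by
        rw [Multiset.map_map]
        exact Multiset.map_congr rfl fun q _ => hgu q
      rw [h1, ← map_multiset_sum Complex.ofRealHom]
      rfl
    refine ⟨(L.map g).sum, ?_, hmapsum2⟩
    have hex : ∃ q ∈ L, q ≠ 0 := by
      by_contra hcon
      push_neg at hcon
      apply hp
      rw [hL]
      apply Multiset.sum_eq_zero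
      intro x hx
      rw [Multiset.mem_map] at hx
      obtain ⟨q, hqL, rfl⟩ := hx
      rw [hcon q hqL, mul_zero]
    obtain ⟨q₀, hq₀L, hq₀⟩ := hex
    obtain ⟨L', rfl⟩ := Multiset.exists_cons_of_mem hq₀L
    rw [Multiset.map_cons, Multiset.sum_cons]
    have h1 : 0 < g q₀ := hgpos q₀ hq₀
    have h2 : 0 ≤ (L'.map g).sum := by
      apply Multiset.sum_nonneg
      intro x hx
      rw [Multiset.mem_map] at hx
      obtain ⟨q, _, rfl⟩ := hx
      exact hg0 q
    linarith
end Aux2
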